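/- Let ρ = Σ_k p_k σ_k ⊗ ρ_k be a separable state, let b̂ be a Hermitian operator on H_B such that each ρ_k is an eigenoperator of b̂ with eigenvalue B(k) (i.e., b̂ ρ_k = B(k) ρ_k). Then there exists a POVM on H_A whose outcome determines the value of b̂ with certainty (i.e., conditioned on each Alice outcome, Bob's b̂-measurement outcome has probability one for a single value) if and only if σ_k σ_{k'} = 0 whenever B(k) ≠ B(k'). -/

import Mathlib

open Matrix
open scoped Kronecker ComplexOrder

noncomputable section

abbrev Mat (n : Type) := Matrix n n ℂ

/-- A density operator: positive semidefinite with unit trace. -/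
def IsDensity {n : Type} [Fintype n] (ρ : Mat n) : Prop :=
  ρ.PosSemidef ∧ ρ.trace = 1

/-- A rank-one projector: Hermitian idempotent of trace one. -/
def IsRankOneProj {n : Type} [Fintype n] (π : Mat n) : Prop :=
  π.IsHermitian ∧ π * π = π ∧ π.trace = 1

/-- A mutually orthogonal family of operators. -/
def OrthFamily {n J : Type} [Fintype n] (π : J → Mat n) : Prop :=
  ∀ i j : J, i ≠ j → π i * π j = 0

/-- A probability distribution on a finite index set. -/
def IsProbDist {J : Type} [Fintype J] (p : J → ℝ) : Prop :=
  (∀ j, 0 ≤ p j) ∧ ∑ j, p j = 1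

/-- Outer product |v⟩⟨v|. -/
def outer {n : Type} (v : n → ℂ) : Mat n :=
  fun i j => v i * star (v j)

/-- Partial trace over the first (Alice) factor. -/
def traceA {a b : Type} [Fintype a] (ρ : Mat (a × b)) : Mat b :=
  fun i j => ∑ k, ρ (k, i) (k, j)

/-- Partial trace over the second (Bob) factor. -/
def traceB {a b : Type} [Fintype b] (ρ : Mat (a × b)) : Mat a :=
  fun i j => ∑ k, ρ (i, k) (j, k)

/-- Separable (unentangled): a convex combination of product density operators. -/
def Separable {a b : Type} [Fintype a] [Fintype b] (ρ : Mat (a × b)) : Prop :=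
  ∃ (m : ℕ) (p : Fin m → ℝ) (σ : Fin m → Mat a) (τ : Fin m → Mat b),
    IsProbDist p ∧ (∀ k, IsDensity (σ k)) ∧ (∀ k, IsDensity (τ k)) ∧
    ρ = ∑ k, (p k : ℂ) • (σ k ⊗ₖ τ k)

/-- Alice-concordant (zero Alice-discord): ρ = Σ_j p_j π_j ⊗ ρ_j with
{π_j} mutually orthogonal rank-one projectors on Alice's factor. -/
def AliceConcordant {a b : Type} [Fintype a] [Fintype b] (ρ : Mat (a × b)) : Prop :=
  ∃ (m : ℕ) (p : Fin m → ℝ) (π : Fin m → Mat a) (σ : Fin m → Mat b),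
    IsProbDist p ∧ (∀ j, IsRankOneProj (π j)) ∧ OrthFamily π ∧
    (∀ j, IsDensity (σ j)) ∧ ρ = ∑ j, (p j : ℂ) • (π j ⊗ₖ σ j)

/-- Bob-concordant: the symmetric notion. -/
def BobConcordant {a b : Type} [Fintype a] [Fintype b] (ρ : Mat (a × b)) : Prop :=
  ∃ (m : ℕ) (p : Fin m → ℝ) (σ : Fin m → Mat a) (π : Fin m → Mat b),
    IsProbDist p ∧ (∀ j, IsRankOneProj (π j)) ∧ OrthFamily π ∧
    (∀ j, IsDensity (σ j)) ∧ ρ = ∑ j, (p j : ℂ) • (σ j ⊗ₖ π j)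

/-- Von Neumann entropy, via the eigenvalues of a Hermitian matrix. -/
def vN {n : Type} [Fintype n] [DecidableEq n] (ρ : Mat n) : ℝ :=
  if h : ρ.IsHermitian then -∑ i, h.eigenvalues i * Real.log (h.eigenvalues i) else 0

open Polynomial

section aux
variable {n : Type} [Fintype n] [DecidableEq n]

open scoped MatrixOrder in
def Matrix.PosSemidef.sqrt {M : Mat n} (_hM : M.PosSemidef) : Mat n := CFC.sqrt M

open scoped MatrixOrder in
lemma Matrix.PosSemidef.posSemidef_sqrt {M : Mat n} (hM : M.PosSemidef) :
    hM.sqrt.PosSemidef := (CFC.sqrt_nonneg M).posSemidef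

open scoped MatrixOrder in
lemma Matrix.PosSemidef.sqrt_mul_self {M : Mat n} (hM : M.PosSemidef) :
    hM.sqrt * hM.sqrt = M := CFC.sqrt_mul_sqrt_self M hM.nonneg

lemma psd_diag_nonneg {M : Mat n} (hM : M.PosSemidef) (i : n) : 0 ≤ M i i := by
  have h := hM.dotProduct_mulVec_nonneg (Pi.single i 1)
  simpa [dotProduct, Matrix.mulVec, Pi.single_apply, Finset.sum_ite_eq,
    Finset.sum_ite_eq'] using h

lemma psd_trace_nonneg {M : Mat n} (hM : M.PosSemidef) : 0 ≤ M.trace :=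
  Finset.sum_nonneg fun i _ => psd_diag_nonneg hM i

lemma ctms_trace_zero {m : Type} [Fintype m] {M : Matrix m n ℂ}
    (h : (Mᴴ * M).trace = 0) : M = 0 := by
  have h2 : ∑ i : n, ∑ j : m, Complex.normSq (M j i) = 0 := by
    have h' : ((∑ i : n, ∑ j : m, Complex.normSq (M j i) : ℝ) : ℂ) = 0 := by
      rw [← h]
      push_cast
      simp only [Matrix.trace, Matrix.diag, Matrix.mul_apply, Matrix.conjTranspose_apply]
      refine Finset.sum_congr rfl fun i _ => Finset.sum_congr rfl fun j _ => ?_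
      rw [Complex.normSq_eq_conj_mul_self]; rfl
    exact_mod_cast h'
  ext j i
  have := (Finset.sum_eq_zero_iff_of_nonneg (fun i _ => Finset.sum_nonneg
    (fun j _ => Complex.normSq_nonneg _))).1 h2 i (Finset.mem_univ i)
  have := (Finset.sum_eq_zero_iff_of_nonneg (fun j _ => Complex.normSq_nonneg _)).1 this j
    (Finset.mem_univ j)
  simpa using Complex.normSq_eq_zero.1 this

lemma psd_trace_zero {M : Mat n} (hM : M.PosSemidef) (h : M.trace = 0) : M = 0 := by
  have hs := hM.posSemidef_sqrt
  have h1 : (hM.sqrtᴴ * hM.sqrt).trace = 0 := by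
    rw [hs.1, hM.sqrt_mul_self]; exact h
  have := ctms_trace_zero h1
  rw [← hM.sqrt_mul_self, this, mul_zero]

lemma psd_mul_aux {A B : Mat n} (hA : A.PosSemidef) (hB : B.PosSemidef) :
    ∃ M : Mat n, (A * B).trace = (Mᴴ * M).trace ∧ (M = 0 → A * B = 0) := by
  obtain ⟨sA, hsAH, hA2⟩ : ∃ sA : Mat n, sAᴴ = sA ∧ sA * sA = A :=
    ⟨hA.sqrt, hA.posSemidef_sqrt.1, hA.sqrt_mul_self⟩
  obtain ⟨sB, hsBH, hB2⟩ : ∃ sB : Mat n, sBᴴ = sB ∧ sB * sB = B :=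
    ⟨hB.sqrt, hB.posSemidef_sqrt.1, hB.sqrt_mul_self⟩
  refine ⟨sA * sB, ?_, ?_⟩
  · have e1 : A * B = (sA * sA * sB) * sB := by rw [← hA2, ← hB2]; noncomm_ring
    rw [e1, trace_mul_comm]
    congr 1
    rw [conjTranspose_mul, hsAH, hsBH]
    noncomm_ring
  · intro h0
    have e2 : A * B = sA * (sA * sB) * sB := by rw [← hA2, ← hB2]; noncomm_ring
    rw [e2, h0, mul_zero, zero_mul]

lemma psd_mul_trace_nonneg {A B : Mat n} (hA : A.PosSemidef) (hB : B.PosSemidef) :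
    0 ≤ (A * B).trace := by
  obtain ⟨M, hM, -⟩ := psd_mul_aux hA hB
  rw [hM]
  exact psd_trace_nonneg (posSemidef_conjTranspose_mul_self _)

lemma psd_mul_trace_zero {A B : Mat n} (hA : A.PosSemidef) (hB : B.PosSemidef)
    (h : (A * B).trace = 0) : A * B = 0 := by
  obtain ⟨M, hM, hM2⟩ := psd_mul_aux hA hB
  exact hM2 (ctms_trace_zero (by rw [← hM, h]))

lemma psd_smul {r : ℝ} (hr : 0 ≤ r) {M : Mat n} (hM : M.PosSemidef) :
    ((r : ℂ) • M).PosSemidef := by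
  refine PosSemidef.of_dotProduct_mulVec_nonneg ?_ ?_
  · unfold Matrix.IsHermitian
    rw [conjTranspose_smul, hM.1]
    congr 1
    simp
  · intro x
    have h1 := hM.dotProduct_mulVec_nonneg x
    have : star x ⬝ᵥ ((r : ℂ) • M) *ᵥ x = (r : ℂ) * (star x ⬝ᵥ M *ᵥ x) := by
      rw [smul_mulVec, dotProduct_smul, smul_eq_mul]
    rw [this]
    exact mul_nonneg (by exact_mod_cast hr) h1

lemma herm_idem_psd {M : Mat n} (h1 : M.IsHermitian) (h2 : M * M = M) : M.PosSemidef := by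
  have := posSemidef_conjTranspose_mul_self M
  rwa [h1.eq, h2] at this

end aux

open Polynomial

section aux2
variable {n : Type} [Fintype n] [DecidableEq n]

/-- Support projector of a Hermitian matrix. -/
noncomputable def suppProj (S : Mat n) : Mat n :=
  if hS : S.IsHermitian then
    (hS.eigenvectorUnitary : Mat n) *
      Matrix.diagonal (fun i => if hS.eigenvalues i = 0 then (0 : ℂ) else 1) *
      (star (hS.eigenvectorUnitary : Mat n))
  else 0

variable {S : Mat n}

lemma suppProj_def (hS : S.IsHermitian) :
    suppProj S = (hS.eigenvectorUnitary : Mat n) *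
      Matrix.diagonal (fun i => if hS.eigenvalues i = 0 then (0 : ℂ) else 1) *
      (star (hS.eigenvectorUnitary : Mat n)) := dif_pos hS

lemma suppProj_herm (hS : S.IsHermitian) : (suppProj S).IsHermitian := by
  rw [suppProj_def hS]
  have hd : (Matrix.diagonal (fun i => if hS.eigenvalues i = 0 then (0 : ℂ) else 1)).IsHermitian :=
    Matrix.isHermitian_diagonal_iff.mpr fun i => by
      by_cases hh : hS.eigenvalues i = 0 <;> simp [hh, _root_.IsSelfAdjoint]
  have := Matrix.isHermitian_mul_mul_conjTranspose
    ((hS.eigenvectorUnitary : Mat n)) hd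
  simpa [star_eq_conjTranspose] using this

lemma suppProj_starU_mul_U (hS : S.IsHermitian) :
    (star (hS.eigenvectorUnitary : Mat n)) * (hS.eigenvectorUnitary : Mat n) = 1 :=
  Matrix.mem_unitaryGroup_iff'.mp (hS.eigenvectorUnitary).2

lemma suppProj_idem (hS : S.IsHermitian) : suppProj S * suppProj S = suppProj S := by
  rw [suppProj_def hS]
  set U := (hS.eigenvectorUnitary : Mat n)
  set D := Matrix.diagonal (fun i => if hS.eigenvalues i = 0 then (0 : ℂ) else 1) with hD
  have h1 : star U * U = 1 := suppProj_starU_mul_U hS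
  have h2 : D * D = D := by
    rw [hD, diagonal_mul_diagonal]
    exact congrArg Matrix.diagonal (funext fun i => by
      by_cases hh : hS.eigenvalues i = 0 <;> simp [hh])
  calc U * D * star U * (U * D * star U) = U * (D * (star U * U) * D) * star U := by
        noncomm_ring
    _ = U * D * star U := by rw [h1, mul_one, h2]

lemma suppProj_psd (hS : S.IsHermitian) : (suppProj S).PosSemidef := by
  have := posSemidef_conjTranspose_mul_self (suppProj S)
  rwa [(suppProj_herm hS).eq, suppProj_idem hS] at this

lemma suppProj_mul_self (hS : S.IsHermitian) : suppProj S * S = S := by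
  have h := hS.spectral_theorem
  set U := (hS.eigenvectorUnitary : Mat n) with hU
  set D := Matrix.diagonal ((RCLike.ofReal ∘ hS.eigenvalues : n → ℂ)) with hD
  set D' := Matrix.diagonal (fun i => if hS.eigenvalues i = 0 then (0 : ℂ) else 1) with hD'
  have h1 : star U * U = 1 := suppProj_starU_mul_U hS
  have h2 : D' * D = D := by
    rw [hD, hD']
    rw [Matrix.diagonal_mul_diagonal]
    exact congrArg Matrix.diagonal (funext fun i => by
      by_cases hh : hS.eigenvalues i = 0 <;> simp [hh, Function.comp])
  calc suppProj S * S = (U * D' * star U) * (U * D * star U) := by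
        rw [suppProj_def hS]; exact congrArg _ h
    _ = U * (D' * (star U * U) * D) * star U := by noncomm_ring
    _ = U * D * star U := by rw [h1, mul_one, h2, mul_assoc]
    _ = S := h.symm

lemma suppProj_kernel (hS : S.IsHermitian) {x : Mat n} (hx : S * x = 0) : suppProj S * x = 0 := by
  set U := (hS.eigenvectorUnitary : Mat n) with hU
  have h1 : star U * U = 1 := suppProj_starU_mul_U hS
  set y := star U * x with hy
  have hDy : Matrix.diagonal (RCLike.ofReal ∘ hS.eigenvalues) * y = 0 := by
    have : U * (Matrix.diagonal (RCLike.ofReal ∘ hS.eigenvalues) * y) = 0 := by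
      rw [hy, ← mul_assoc, ← mul_assoc, show U * Matrix.diagonal (RCLike.ofReal ∘ hS.eigenvalues) * star U = S from hS.spectral_theorem.symm]
      · exact hx
    calc Matrix.diagonal (RCLike.ofReal ∘ hS.eigenvalues) * y
        = (star U * U) * (Matrix.diagonal (RCLike.ofReal ∘ hS.eigenvalues) * y) := by
          rw [h1, one_mul]
      _ = star U * (U * (Matrix.diagonal (RCLike.ofReal ∘ hS.eigenvalues) * y)) := by
          noncomm_ring
      _ = 0 := by rw [this, mul_zero]
  have hD'y : Matrix.diagonal (fun i => if hS.eigenvalues i = 0 then (0 : ℂ) else 1) * y = 0 := by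
    ext i j
    have h0 := congrFun (congrFun hDy i) j
    simp only [diagonal_mul, Function.comp_apply, Matrix.zero_apply] at h0 ⊢
    by_cases h : hS.eigenvalues i = 0
    · simp [h]
    · have : (hS.eigenvalues i : ℂ) ≠ 0 := by exact_mod_cast h
      simp [h]
      exact (mul_eq_zero.mp h0).resolve_left this
  rw [suppProj_def hS, mul_assoc, ← hy, mul_assoc, hD'y, mul_zero]

lemma pow_eigen (A x : Mat n) (μ : ℂ) (h : A * x = μ • x) :
    ∀ m : ℕ, A ^ m * x = μ ^ m • x := by
  intro m
  induction m with
  | zero => simp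
  | succ m ih =>
    rw [pow_succ, pow_succ, mul_assoc, h, mul_smul_comm, ih, smul_smul, mul_comm]

lemma aeval_eigen (A x : Mat n) (μ : ℂ) (h : A * x = μ • x) (q : Polynomial ℂ) :
    (Polynomial.aeval A) q * x = q.eval μ • x := by
  induction q using Polynomial.induction_on' with
  | add p q hp hq => rw [map_add, add_mul, hp, hq, Polynomial.eval_add, add_smul]
  | monomial m c =>
    rw [Polynomial.aeval_monomial, Polynomial.eval_monomial, ← Algebra.smul_def,
      smul_mul_assoc, pow_eigen A x μ h m, smul_smul]

end aux2

/-- for ρ = Σ_k p_k σ_k⊗ρ_k with b̂ρ_k = B(k)ρ_k, Alice has a POVM whose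
outcomes determine the value of b̂ with certainty iff σ_k σ_k' = 0 whenever B(k) ≠ B(k'). -/
theorem stmt_9 {a b K : Type} [Fintype a] [Fintype b] [Fintype K]
    [DecidableEq a] [DecidableEq b]
    (p : K → ℝ) (σ : K → Mat a) (τ : K → Mat b) (bop : Mat b) (Bv : K → ℝ)
    (ρ : Mat (a × b))
    (hp : IsProbDist p) (hppos : ∀ k, 0 < p k)
    (hσ : ∀ k, IsDensity (σ k)) (hτ : ∀ k, IsDensity (τ k))
    (hbop : bop.IsHermitian) (heig : ∀ k, bop * τ k = (Bv k : ℂ) • τ k)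
    (hρ : ρ = ∑ k, (p k : ℂ) • (σ k ⊗ₖ τ k)) :
    (∃ (m : ℕ) (E : Fin m → Mat a), (∀ i, (E i).PosSemidef) ∧ (∑ i, E i = 1) ∧
        ∀ i, Matrix.trace ((E i ⊗ₖ (1 : Mat b)) * ρ) ≠ 0 →
          ∃ β : ℝ, bop * traceA ((E i ⊗ₖ (1 : Mat b)) * ρ)
              = (β : ℂ) • traceA ((E i ⊗ₖ (1 : Mat b)) * ρ))
    ↔ (∀ k k', Bv k ≠ Bv k' → σ k * σ k' = 0) := by
  classical
  obtain ⟨hp0, -⟩ := hp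
  have hτtr : ∀ k, (τ k).trace = 1 := fun k => (hτ k).2
  have traceA_sum : ∀ (s : Finset K) (f : K → Mat (a × b)),
      traceA (∑ j ∈ s, f j) = ∑ j ∈ s, traceA (f j) := by
    intro s f
    funext i j
    simp only [traceA, Matrix.sum_apply]
    rw [Finset.sum_comm]
  have traceA_smul : ∀ (c : ℂ) (M : Mat (a × b)), traceA (c • M) = c • traceA M := by
    intro c M
    funext i j
    simp only [traceA, Matrix.smul_apply, smul_eq_mul, Finset.mul_sum]
  have traceA_kron : ∀ (A : Mat a) (B : Mat b), traceA (A ⊗ₖ B) = A.trace • B := by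
    intro A B
    funext i j
    simp only [traceA, Matrix.smul_apply, Matrix.kroneckerMap_apply, Matrix.trace,
      Matrix.diag, smul_eq_mul]
    rw [Finset.sum_mul]
  have traceA_formula : ∀ E : Mat a,
      traceA ((E ⊗ₖ (1 : Mat b)) * ρ) = ∑ j, ((p j : ℂ) * (E * σ j).trace) • τ j := by
    intro E
    rw [hρ, Finset.mul_sum, traceA_sum]
    refine Finset.sum_congr rfl fun j _ => ?_
    rw [mul_smul_comm, ← Matrix.mul_kronecker_mul, one_mul, traceA_smul, traceA_kron, smul_smul]
  have trace_formula : ∀ E : Mat a,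
      ((E ⊗ₖ (1 : Mat b)) * ρ).trace = ∑ j, (p j : ℂ) * (E * σ j).trace := by
    intro E
    rw [hρ, Finset.mul_sum, Matrix.trace_sum]
    refine Finset.sum_congr rfl fun j _ => ?_
    rw [mul_smul_comm, ← Matrix.mul_kronecker_mul, one_mul, Matrix.trace_smul,
      Matrix.trace_kronecker, hτtr, mul_one, smul_eq_mul]
  constructor
  · rintro ⟨m, E, hEpsd, hEsum, hcond⟩ k k' hkk'
    have key : ∀ i, σ k * E i * σ k' = 0 := by
      intro i
      have hEσH : ∀ (j : K), E i * σ j = 0 → σ j * E i = 0 := by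
        intro j hj
        have h := congrArg Matrix.conjTranspose hj
        rwa [Matrix.conjTranspose_mul, (hσ j).1.1.eq, (hEpsd i).1.eq,
          Matrix.conjTranspose_zero] at h
      have hczero : ∀ j : K, (p j : ℂ) * (E i * σ j).trace = 0 → E i * σ j = 0 := by
        intro j hj
        have hpj : (p j : ℂ) ≠ 0 := by
          exact_mod_cast (hppos j).ne'
        have ht : (E i * σ j).trace = 0 := (mul_eq_zero.1 hj).resolve_left hpj
        exact psd_mul_trace_zero (hEpsd i) (hσ j).1 ht
      have hker : (E i * σ k = 0) ∨ (E i * σ k' = 0) := by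
        by_cases h0 : ((E i ⊗ₖ (1 : Mat b)) * ρ).trace = 0
        · left
          have hsum0 : ∑ j, (p j : ℂ) * (E i * σ j).trace = 0 := by
            rw [← trace_formula]; exact h0
          have hnn : ∀ j ∈ Finset.univ, (0 : ℂ) ≤ (p j : ℂ) * (E i * σ j).trace := fun j _ =>
            mul_nonneg (by exact_mod_cast hp0 j) (psd_mul_trace_nonneg (hEpsd i) (hσ j).1)
          exact hczero k ((Finset.sum_eq_zero_iff_of_nonneg hnn).1 hsum0 k
            (Finset.mem_univ k))
        · obtain ⟨β, hβ⟩ := hcond i h0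
          rw [traceA_formula] at hβ
          obtain ⟨c, hcapp⟩ : ∃ c : K → ℂ, ∀ j, c j = (p j : ℂ) * (E i * σ j).trace :=
            ⟨_, fun j => rfl⟩
          have hβ' : bop * (∑ j, c j • τ j) = (β : ℂ) • (∑ j, c j • τ j) := by
            simp only [hcapp]; exact hβ
          have hcnn : ∀ j, (0 : ℂ) ≤ c j := fun j => by
            rw [hcapp]
            exact mul_nonneg (by exact_mod_cast hp0 j)
              (psd_mul_trace_nonneg (hEpsd i) (hσ j).1)
          have claim : ∀ j₀, c j₀ ≠ 0 → ((Bv j₀ : ℂ)) = (β : ℂ) := by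
            intro j₀ hj₀
            by_contra hne2
            obtain ⟨s, hs⟩ : ∃ s : Finset ℂ,
                s = (Finset.univ.image fun j => ((Bv j : ℂ))).erase ((Bv j₀ : ℂ)) := ⟨_, rfl⟩
            obtain ⟨q, hqdef⟩ : ∃ q : Polynomial ℂ,
                q = (Polynomial.X - Polynomial.C (β : ℂ)) *
                  ∏ w ∈ s, (Polynomial.X - Polynomial.C w) := ⟨_, rfl⟩
            have h1 : (Polynomial.aeval bop) q * (∑ j, c j • τ j) = 0 := by
              rw [aeval_eigen bop _ (β : ℂ) hβ' q]
              have : q.eval (β : ℂ) = 0 := by simp [hqdef]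
              rw [this, zero_smul]
            have h2 : (Polynomial.aeval bop) q * (∑ j, c j • τ j)
                = ∑ j, (c j * q.eval ((Bv j : ℂ))) • τ j := by
              rw [Finset.mul_sum]
              refine Finset.sum_congr rfl fun j _ => ?_
              rw [mul_smul_comm, aeval_eigen bop (τ j) ((Bv j : ℂ)) (heig j) q, smul_smul]
            have h3 : ∑ j, c j * q.eval ((Bv j : ℂ)) = 0 := by
              have h5 := congrArg Matrix.trace (h2.symm.trans h1)
              simpa [Matrix.trace_sum, Matrix.trace_smul, hτtr] using h5
            have hqval : ∀ j, ((Bv j : ℂ)) ≠ ((Bv j₀ : ℂ)) → q.eval ((Bv j : ℂ)) = 0 := by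
              intro j hj
              have hmem : ((Bv j : ℂ)) ∈ s := by
                rw [hs]
                exact Finset.mem_erase.2 ⟨hj, Finset.mem_image.2 ⟨j, Finset.mem_univ j, rfl⟩⟩
              rw [hqdef, Polynomial.eval_mul, Polynomial.eval_prod,
                Finset.prod_eq_zero hmem (by simp), mul_zero]
            have hq0 : q.eval ((Bv j₀ : ℂ)) ≠ 0 := by
              rw [hqdef, Polynomial.eval_mul, Polynomial.eval_prod]
              apply mul_ne_zero
              · simpa using sub_ne_zero.2 hne2
              · rw [Finset.prod_ne_zero_iff]
                intro w hw
                have hwne : w ≠ ((Bv j₀ : ℂ)) := by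
                  rw [hs] at hw
                  exact (Finset.mem_erase.1 hw).1
                simp only [Polynomial.eval_sub, Polynomial.eval_X, Polynomial.eval_C]
                exact sub_ne_zero.2 (Ne.symm hwne)
            have h6 : ∑ j ∈ Finset.univ.filter (fun j => ((Bv j : ℂ)) = ((Bv j₀ : ℂ))),
                c j * q.eval ((Bv j₀ : ℂ)) = 0 := by
              have hnotpart : ∑ j ∈ Finset.univ.filter
                  (fun j => ¬((Bv j : ℂ)) = ((Bv j₀ : ℂ))), c j * q.eval ((Bv j : ℂ)) = 0 :=
                Finset.sum_eq_zero fun j hj => by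
                  rw [hqval j (Finset.mem_filter.1 hj).2, mul_zero]
              have hppart : ∑ j ∈ Finset.univ.filter
                  (fun j => ((Bv j : ℂ)) = ((Bv j₀ : ℂ))), c j * q.eval ((Bv j : ℂ))
                  = ∑ j ∈ Finset.univ.filter
                  (fun j => ((Bv j : ℂ)) = ((Bv j₀ : ℂ))), c j * q.eval ((Bv j₀ : ℂ)) :=
                Finset.sum_congr rfl fun j hj => by rw [(Finset.mem_filter.1 hj).2]
              calc ∑ j ∈ Finset.univ.filter (fun j => ((Bv j : ℂ)) = ((Bv j₀ : ℂ))),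
                    c j * q.eval ((Bv j₀ : ℂ))
                  = ∑ j ∈ Finset.univ.filter (fun j => ((Bv j : ℂ)) = ((Bv j₀ : ℂ))),
                    c j * q.eval ((Bv j : ℂ)) := hppart.symm
                _ = (∑ j ∈ Finset.univ.filter (fun j => ((Bv j : ℂ)) = ((Bv j₀ : ℂ))),
                      c j * q.eval ((Bv j : ℂ)))
                    + ∑ j ∈ Finset.univ.filter (fun j => ¬((Bv j : ℂ)) = ((Bv j₀ : ℂ))),
                      c j * q.eval ((Bv j : ℂ)) := by rw [hnotpart, add_zero]
                _ = ∑ j, c j * q.eval ((Bv j : ℂ)) :=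
                    Finset.sum_filter_add_sum_filter_not Finset.univ _ _
                _ = 0 := h3
            have h7 : (∑ j ∈ Finset.univ.filter
                (fun j => ((Bv j : ℂ)) = ((Bv j₀ : ℂ))), c j) = 0 := by
              rw [← Finset.sum_mul] at h6
              exact (mul_eq_zero.1 h6).resolve_right hq0
            have : c j₀ = 0 := (Finset.sum_eq_zero_iff_of_nonneg
              (fun j _ => hcnn j)).1 h7 j₀ (by simp)
            exact hj₀ this
          by_cases hk0 : c k = 0
          · exact Or.inl (hczero k (by rw [← hcapp]; exact hk0))
          · right
            have hkβ := claim k hk0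
            have hk'0 : c k' = 0 := by
              by_contra hcc
              have := claim k' hcc
              exact hkk' (by exact_mod_cast hkβ.trans this.symm)
            exact hczero k' (by rw [← hcapp]; exact hk'0)
      rcases hker with h | h
      · rw [hEσH k h, zero_mul]
      · rw [mul_assoc, h, mul_zero]
    calc σ k * σ k' = σ k * (∑ i, E i) * σ k' := by rw [hEsum, mul_one]
      _ = ∑ i, σ k * E i * σ k' := by rw [Finset.mul_sum, Finset.sum_mul]
      _ = 0 := Finset.sum_eq_zero fun i _ => key i
  · intro hOrth
    obtain ⟨S, hSapp⟩ : ∃ S : K → Mat a,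
        ∀ k, S k = ∑ j ∈ Finset.univ.filter (fun j => Bv j = Bv k), (p j : ℂ) • σ j :=
      ⟨_, fun k => rfl⟩
    have hFcongr : ∀ {k j : K}, Bv k = Bv j →
        Finset.univ.filter (fun i => Bv i = Bv k) = Finset.univ.filter (fun i => Bv i = Bv j) :=
      fun {k j} h => Finset.filter_congr (fun i _ => by rw [h])
    have hSfilter : ∀ {k j : K}, Bv k = Bv j → S k = S j := by
      intro k j h
      rw [hSapp k, hSapp j, hFcongr h]
    have hSpsd : ∀ k, (S k).PosSemidef := by
      intro k
      rw [hSapp k]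
      exact Finset.sum_induction _ _ (fun A B hA hB => hA.add hB) Matrix.PosSemidef.zero
        (fun j _ => psd_smul (hp0 j) (hσ j).1)
    have hScross : ∀ k j, Bv k ≠ Bv j → S k * σ j = 0 := by
      intro k j h
      rw [hSapp k, Finset.sum_mul]
      refine Finset.sum_eq_zero fun i hi => ?_
      rw [smul_mul_assoc, hOrth i j
        (fun hh => h (((Finset.mem_filter.1 hi).2).symm.trans hh)), smul_zero]
    have hQcross : ∀ k j, Bv k ≠ Bv j → suppProj (S k) * σ j = 0 := fun k j h =>
      suppProj_kernel (hSpsd k).1 (hScross k j h)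
    have hSS : ∀ k j, Bv k ≠ Bv j → S k * S j = 0 := by
      intro k j h
      rw [hSapp j, Finset.mul_sum]
      refine Finset.sum_eq_zero fun i hi => ?_
      rw [mul_smul_comm, hScross k i
        (fun hh => h (hh.trans (Finset.mem_filter.1 hi).2)), smul_zero]
    have hQQ : ∀ k j, Bv k ≠ Bv j → suppProj (S k) * suppProj (S j) = 0 := by
      intro k j h
      have h1 : S j * S k = 0 := hSS j k (Ne.symm h)
      have h2 : suppProj (S j) * S k = 0 := suppProj_kernel (hSpsd j).1 h1
      have h3 : S k * suppProj (S j) = 0 := by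
        have h4 := congrArg Matrix.conjTranspose h2
        rwa [Matrix.conjTranspose_mul, (suppProj_herm (hSpsd j).1).eq, (hSpsd k).1.eq,
          Matrix.conjTranspose_zero] at h4
      exact suppProj_kernel (hSpsd k).1 h3
    have hQσ : ∀ k, suppProj (S k) * σ k = σ k := by
      intro k
      obtain ⟨R, hRdef⟩ : ∃ R : Mat a, R = 1 - suppProj (S k) := ⟨_, rfl⟩
      have hRH : Rᴴ = R := by
        rw [hRdef, Matrix.conjTranspose_sub, Matrix.conjTranspose_one,
          (suppProj_herm (hSpsd k).1).eq]
      have hRS : R * S k = 0 := by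
        rw [hRdef, sub_mul, one_mul, suppProj_mul_self (hSpsd k).1, sub_self]
      have hsum0 : ∑ j ∈ Finset.univ.filter (fun j => Bv j = Bv k),
          (p j : ℂ) • (R * σ j * Rᴴ) = 0 := by
        calc ∑ j ∈ Finset.univ.filter (fun j => Bv j = Bv k), (p j : ℂ) • (R * σ j * Rᴴ)
            = R * S k * Rᴴ := by
              rw [hSapp k, Finset.mul_sum, Finset.sum_mul]
              refine Finset.sum_congr rfl fun j _ => ?_
              rw [mul_smul_comm, smul_mul_assoc]
          _ = 0 := by rw [hRS, zero_mul]
      have hmem : k ∈ Finset.univ.filter (fun j => Bv j = Bv k) := by simp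
      have hpsd : ∀ j ∈ Finset.univ.filter (fun j => Bv j = Bv k),
          ((p j : ℂ) • (R * σ j * Rᴴ)).PosSemidef := fun j _ =>
        psd_smul (hp0 j) ((hσ j).1.mul_mul_conjTranspose_same R)
      have htr0 : ∑ j ∈ Finset.univ.filter (fun j => Bv j = Bv k),
          ((p j : ℂ) • (R * σ j * Rᴴ)).trace = 0 := by
        rw [← Matrix.trace_sum, hsum0, Matrix.trace_zero]
      have hterm : (p k : ℂ) • (R * σ k * Rᴴ) = 0 :=
        psd_trace_zero (hpsd k hmem)
          ((Finset.sum_eq_zero_iff_of_nonneg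
            (fun j hj => psd_trace_nonneg (hpsd j hj))).1 htr0 k hmem)
      have hpk : (p k : ℂ) ≠ 0 := by exact_mod_cast (hppos k).ne'
      have hRσR : R * σ k * R = 0 := by
        have := (smul_eq_zero.1 hterm).resolve_left hpk
        rwa [hRH] at this
      obtain ⟨s, hsH, hs2⟩ : ∃ s : Mat a, sᴴ = s ∧ s * s = σ k :=
        ⟨(hσ k).1.sqrt, (hσ k).1.posSemidef_sqrt.1, (hσ k).1.sqrt_mul_self⟩
      have h4 : (R * s) * (R * s)ᴴ = 0 := by
        rw [Matrix.conjTranspose_mul, hsH, hRH]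
        calc R * s * (s * R) = R * (s * s) * R := by noncomm_ring
          _ = 0 := by rw [hs2, hRσR]
      have h5 : R * s = 0 := Matrix.self_mul_conjTranspose_eq_zero.1 h4
      have h6 : R * σ k = 0 := by rw [← hs2, ← mul_assoc, h5, zero_mul]
      rw [hRdef, sub_mul, one_mul, sub_eq_zero] at h6
      exact h6.symm
    obtain ⟨nn, hnnapp⟩ : ∃ nn : K → ℝ,
        ∀ k, nn k = ((Finset.univ.filter (fun j => Bv j = Bv k)).card : ℝ)⁻¹ :=
      ⟨_, fun k => rfl⟩
    have hnn0 : ∀ k, 0 ≤ nn k := fun k => by rw [hnnapp k]; positivity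
    have hcardne : ∀ k, (Finset.univ.filter (fun j => Bv j = Bv k)).card ≠ 0 := by
      intro k
      simp only [ne_eq, Finset.card_eq_zero]
      intro hempty
      have : k ∈ Finset.univ.filter (fun j => Bv j = Bv k) := by simp
      rw [hempty] at this
      exact absurd this (Finset.notMem_empty k)
    obtain ⟨P, hP⟩ : ∃ P : Mat a, P = ∑ j, ((nn j : ℝ) : ℂ) • suppProj (S j) := ⟨_, rfl⟩
    have hclass_sum : ∀ (k : K) (X : Mat a),
        (∑ j, (if Bv j = Bv k then ((nn k : ℝ) : ℂ) • X else 0)) = X := by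
      intro k X
      rw [← Finset.sum_filter, Finset.sum_const, ← Nat.cast_smul_eq_nsmul ℂ, smul_smul]
      have hone : ((Finset.univ.filter (fun j => Bv j = Bv k)).card : ℂ)
          * ((nn k : ℝ) : ℂ) = 1 := by
        rw [hnnapp k]
        push_cast
        exact mul_inv_cancel₀ (by exact_mod_cast hcardne k)
      rw [hone, one_smul]
    have hPσ : ∀ k, P * σ k = σ k := by
      intro k
      rw [hP, Finset.sum_mul]
      have hterm : ∀ j, (((nn j : ℝ) : ℂ) • suppProj (S j)) * σ k
          = if Bv j = Bv k then ((nn k : ℝ) : ℂ) • σ k else 0 := by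
        intro j
        by_cases hj : Bv j = Bv k
        · rw [if_pos hj, smul_mul_assoc, hSfilter hj, hQσ k]
          congr 2
          rw [hnnapp j, hnnapp k, hFcongr hj]
        · rw [if_neg hj, smul_mul_assoc, hQcross j k hj, smul_zero]
      rw [Finset.sum_congr rfl (fun j _ => hterm j), hclass_sum k]
    have hPQ : ∀ k, P * suppProj (S k) = suppProj (S k) := by
      intro k
      rw [hP, Finset.sum_mul]
      have hterm : ∀ j, (((nn j : ℝ) : ℂ) • suppProj (S j)) * suppProj (S k)
          = if Bv j = Bv k then ((nn k : ℝ) : ℂ) • suppProj (S k) else 0 := by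
        intro j
        by_cases hj : Bv j = Bv k
        · rw [if_pos hj, smul_mul_assoc, hSfilter hj, suppProj_idem (hSpsd k).1]
          congr 2
          rw [hnnapp j, hnnapp k, hFcongr hj]
        · rw [if_neg hj, smul_mul_assoc, hQQ j k hj, smul_zero]
      rw [Finset.sum_congr rfl (fun j _ => hterm j), hclass_sum k]
    have hPP : P * P = P := by
      nth_rewrite 2 [hP]
      rw [Finset.mul_sum]
      calc ∑ j, P * (((nn j : ℝ) : ℂ) • suppProj (S j))
          = ∑ j, ((nn j : ℝ) : ℂ) • suppProj (S j) := by
            refine Finset.sum_congr rfl fun j _ => ?_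
            rw [mul_smul_comm, hPQ j]
        _ = P := hP.symm
    have hPH : Pᴴ = P := by
      rw [hP, Matrix.conjTranspose_sum]
      refine Finset.sum_congr rfl fun j _ => ?_
      rw [Matrix.conjTranspose_smul, (suppProj_herm (hSpsd j).1).eq]
      congr 1
      simp [Complex.star_def, Complex.conj_ofReal]
    refine ⟨Fintype.card K + 1,
      Fin.lastCases (1 - P)
        (fun i => ((nn ((Fintype.equivFin K).symm i) : ℝ) : ℂ) •
          suppProj (S ((Fintype.equivFin K).symm i))), ?_, ?_, ?_⟩
    · intro i
      induction i using Fin.lastCases with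
      | last =>
        simp only [Fin.lastCases_last]
        refine herm_idem_psd ?_ ?_
        · show (1 - P)ᴴ = 1 - P
          rw [Matrix.conjTranspose_sub, Matrix.conjTranspose_one, hPH]
        · calc (1 - P) * (1 - P) = 1 - P - P + P * P := by noncomm_ring
            _ = 1 - P := by rw [hPP]; noncomm_ring
      | cast i =>
        simp only [Fin.lastCases_castSucc]
        exact psd_smul (hnn0 _) (suppProj_psd (hSpsd _).1)
    · rw [Fin.sum_univ_castSucc]
      simp only [Fin.lastCases_castSucc, Fin.lastCases_last]
      rw [Equiv.sum_comp (Fintype.equivFin K).symm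
        (fun k => ((nn k : ℝ) : ℂ) • suppProj (S k)), ← hP]
      abel
    · intro i
      induction i using Fin.lastCases with
      | last =>
        intro htr
        exfalso
        apply htr
        simp only [Fin.lastCases_last]
        rw [trace_formula]
        refine Finset.sum_eq_zero fun j _ => ?_
        rw [show (1 - P) * σ j = 0 from by rw [sub_mul, one_mul, hPσ j, sub_self],
          Matrix.trace_zero, mul_zero]
      | cast i =>
        intro htr
        refine ⟨Bv ((Fintype.equivFin K).symm i), ?_⟩
        simp only [Fin.lastCases_castSucc]
        rw [traceA_formula, Finset.mul_sum, Finset.smul_sum]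
        refine Finset.sum_congr rfl fun j _ => ?_
        by_cases h : Bv j = Bv ((Fintype.equivFin K).symm i)
        · rw [mul_smul_comm, heig j, h, smul_smul, smul_smul, mul_comm]
        · have h0 : suppProj (S ((Fintype.equivFin K).symm i)) * σ j = 0 :=
            hQcross _ j (Ne.symm h)
          have hd : (((nn ((Fintype.equivFin K).symm i) : ℝ) : ℂ) •
              suppProj (S ((Fintype.equivFin K).symm i))) * σ j = 0 := by
            rw [smul_mul_assoc, h0, smul_zero]
          rw [hd]
          simp
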